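/- With the RASS jamming model, where the received jamming vector at time t has k-th entry q̄_k(t) = α(θ_k)ᴴ(p_k(t) ∘ α(θ_1))·r_k, with p_1(t),...,p_K(t) mutually independent Bernoulli(p) random selection vectors (independent across radars due to distinct delays) and r_k a deterministic complex scalar with |r_k|² = R_rr, the covariance matrix R̄_JJ := E[q̄ q̄ᴴ] equals p²·R_JJ + Np(1-p)·R_rr·I, where R_JJ is the covariance under full-array transmission (p ≡ 1). -/

import Mathlib

open MeasureTheory Matrix
open scoped NNReal ENNReal

lemma int_one_coord {ι X : Type*} [Fintype ι] [DecidableEq ι] [MeasureSpace X]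
    [IsProbabilityMeasure (volume : Measure X)] (f : X → ℂ) (j : ι) :
    ∫ x : ι → X, f (x j) = ∫ x, f x := by
  have h := integral_fintype_prod_volume_eq_prod
    (fun i => if i = j then f else fun _ => (1 : ℂ))
  rw [show (fun x : ι → X => f (x j)) = fun x : ι → X =>
      ∏ i, (if i = j then f else fun _ => (1:ℂ)) (x i) from ?_, h]
  · rw [Finset.prod_eq_single j (fun b _ hb => by simp [hb]) (by simp)]
    simp
  · funext x
    rw [Finset.prod_eq_single j (fun b _ hb => by simp [hb]) (by simp)]
    simp

lemma int_two_coord {ι X : Type*} [Fintype ι] [DecidableEq ι] [MeasureSpace X]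
    [IsProbabilityMeasure (volume : Measure X)] (f g : X → ℂ) (k l : ι) (hkl : k ≠ l) :
    ∫ x : ι → X, f (x k) * g (x l) = (∫ x, f x) * ∫ x, g x := by
  have h := integral_fintype_prod_volume_eq_prod
    (fun i => if i = k then f else if i = l then g else fun _ => (1 : ℂ))
  have hprod : ∀ (F : ι → ℂ), (∀ i, i ≠ k → i ≠ l → F i = 1) →
      ∏ i, F i = F k * F l := by
    intro F hF
    rw [← Finset.prod_subset (Finset.subset_univ {k, l}) (fun i _ hi => by
      simp only [Finset.mem_insert, Finset.mem_singleton, not_or] at hi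
      exact hF i hi.1 hi.2)]
    rw [Finset.prod_insert (by simp [hkl]), Finset.prod_singleton]
  rw [show (fun x : ι → X => f (x k) * g (x l)) = fun x : ι → X =>
      ∏ i, (if i = k then f else if i = l then g else fun _ => (1:ℂ)) (x i) from ?_, h]
  · rw [hprod _ (fun i h1 h2 => by simp [h1, h2])]
    simp [hkl, Ne.symm hkl]
  · funext x
    rw [hprod _ (fun i h1 h2 => by simp [h1, h2])]
    simp [hkl, Ne.symm hkl]

lemma mul_star_self (z : ℂ) : z * star z = ((‖z‖ ^ 2 : ℝ) : ℂ) := by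
  rw [show star z = (starRingEnd ℂ) z from rfl, Complex.mul_conj, Complex.normSq_eq_norm_sq]

lemma int_bern (p : ℝ≥0) (hp : p ≤ 1) :
    ∫ b, (if b then (1:ℂ) else 0) ∂(PMF.bernoulli p hp).toMeasure
      = ((p : ℝ) : ℂ) := by
  rw [integral_fintype (Integrable.of_finite)]
  simp [Measure.real, PMF.toMeasure_apply_singleton _ _ (measurableSet_singleton _), PMF.bernoulli_apply]

/-- Proposition 1: under RASS jamming with independent Bernoulli(p) selection
vectors at the different radars, the jamming covariance matrix satisfies
`R̄_JJ = p²·R_JJ + Np(1-p)·R_rr·I`. -/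
theorem rass_jamming_covariance (K N : ℕ) (d lam : ℝ) (hd : 0 < d) (hlam : 0 < lam)
    (θ : Fin K → ℝ) (θ1 : ℝ) (α : ℝ → Fin N → ℂ)
    (hα : ∀ ϑ (n : Fin N),
      α ϑ n = Complex.exp (Complex.I * ((2 * Real.pi * (n : ℝ) * d * Real.sin ϑ / lam : ℝ) : ℂ)))
    (r : Fin K → ℂ) (Rrr : ℝ) (hr : ∀ k, ‖r k‖ ^ 2 = Rrr)
    (p : ℝ≥0) (hp : p ≤ 1)
    (RJJ : Matrix (Fin K) (Fin K) ℂ)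
    (hRJJ : RJJ = Matrix.of fun k l =>
      ((∑ n, star (α (θ k) n) * α θ1 n) * r k) * star ((∑ n, star (α (θ l) n) * α θ1 n) * r l)) :
    (Matrix.of fun k l : Fin K =>
        ∫ ω : Fin K → (Fin N → Bool),
          ((∑ n, star (α (θ k) n) * ((if ω k n then (1 : ℂ) else 0) * α θ1 n)) * r k)
            * star ((∑ n, star (α (θ l) n) * ((if ω l n then (1 : ℂ) else 0) * α θ1 n)) * r l)
          ∂(Measure.pi fun _ : Fin K =>
              Measure.pi fun _ : Fin N => (PMF.bernoulli p (by exact_mod_cast hp)).toMeasure))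
      = (((p : ℝ) ^ 2 : ℝ) : ℂ) • RJJ
        + (((N : ℝ) * (p : ℝ) * (1 - (p : ℝ)) * Rrr : ℝ) : ℂ) • (1 : Matrix (Fin K) (Fin K) ℂ) := by
  classical
  have hp' : p ≤ 1 := hp
  letI : MeasureSpace Bool := ⟨(PMF.bernoulli p hp').toMeasure⟩
  haveI : IsProbabilityMeasure (volume : Measure Bool) := PMF.toMeasure.isProbabilityMeasure _
  -- abbreviations
  set a : Fin K → Fin N → ℂ := fun k n => star (α (θ k) n) * α θ1 n with ha
  set A : Fin K → ℂ := fun k => ∑ n, a k n with hA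
  set B : Fin K → (Fin N → Bool) → ℂ :=
    fun k x => (∑ n, star (α (θ k) n) * ((if x n then (1 : ℂ) else 0) * α θ1 n)) * r k with hBdef
  -- unit modulus
  have habs : ∀ ϑ (n : Fin N), ‖α ϑ n‖ = 1 := by
    intro ϑ n
    rw [hα, mul_comm]
    exact Complex.norm_exp_ofReal_mul_I _
  have hunit : ∀ k (n : Fin N), a k n * star (a k n) = 1 := by
    intro k n
    have h1 : α (θ k) n * star (α (θ k) n) = 1 := by
      rw [mul_star_self, habs]; norm_num
    have h2 : α θ1 n * star (α θ1 n) = 1 := by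
      rw [mul_star_self, habs]; norm_num
    calc a k n * star (a k n)
        = (α (θ k) n * star (α (θ k) n)) * (α θ1 n * star (α θ1 n)) := by
          simp only [ha, star_mul', star_star]; ring
      _ = 1 := by rw [h1, h2, one_mul]
  have hrr : ∀ k, r k * star (r k) = ((Rrr : ℝ) : ℂ) := by
    intro k
    rw [mul_star_self, hr]
  -- mean of indicator on Fin N → Bool
  have hind : ∀ n : Fin N, ∫ x : Fin N → Bool, (if x n then (1:ℂ) else 0) = ((p : ℝ) : ℂ) := by
    intro n
    exact (int_one_coord (fun b : Bool => if b then (1:ℂ) else 0) n).trans (int_bern p hp')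
  -- second moments of indicators
  have hmom : ∀ n m : Fin N,
      ∫ x : Fin N → Bool, (if x n then (1:ℂ) else 0) * (if x m then (1:ℂ) else 0)
        = if n = m then ((p : ℝ) : ℂ) else ((p : ℝ) : ℂ) ^ 2 := by
    intro n m
    by_cases h : n = m
    · subst h
      rw [if_pos rfl, show (fun x : Fin N → Bool =>
          (if x n then (1:ℂ) else 0) * (if x n then (1:ℂ) else 0))
          = fun x => (if x n then (1:ℂ) else 0) from funext fun x => by
            by_cases hx : x n <;> simp [hx]]
      exact hind n
    · rw [if_neg h]
      refine (int_two_coord (fun b : Bool => if b then (1:ℂ) else 0)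
        (fun b : Bool => if b then (1:ℂ) else 0) n m h).trans ?_
      rw [show (∫ b : Bool, (if b then (1:ℂ) else 0)) = ((p:ℝ):ℂ) from int_bern p hp']
      ring
  -- mean of B k
  have hBmean : ∀ k, ∫ x : Fin N → Bool, B k x = ((p : ℝ) : ℂ) * (A k * r k) := by
    intro k
    have h1 : (fun x : Fin N → Bool => B k x)
        = fun x => ∑ n, (a k n * r k) * (if x n then (1:ℂ) else 0) := by
      funext x
      simp only [hBdef, ha, Finset.sum_mul]
      refine Finset.sum_congr rfl fun n _ => by ring
    rw [h1, integral_finset_sum _ (fun n _ => Integrable.of_finite)]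
    simp_rw [integral_const_mul, hind]
    simp only [hA, Finset.sum_mul, Finset.mul_sum]
    exact Finset.sum_congr rfl fun n _ => by ring
  -- star of B
  have hstarB : ∀ k x, star (B k x)
      = (∑ n, (star (a k n) * star (r k)) * (if x n then (1:ℂ) else 0)) := by
    intro k x
    simp only [hBdef, ha, star_mul', star_sum, Finset.sum_mul]
    refine Finset.sum_congr rfl fun n _ => ?_
    by_cases hx : x n <;> simp [hx] <;> ring
  -- second moment of B k
  have hBB : ∀ k, ∫ x : Fin N → Bool, B k x * star (B k x)
      = ((p : ℝ) : ℂ) ^ 2 * ((A k * r k) * star (A k * r k))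
        + (((p : ℝ) - (p : ℝ) ^ 2 : ℝ) : ℂ) * N * ((Rrr : ℝ) : ℂ) := by
    intro k
    have h1 : (fun x : Fin N → Bool => B k x * star (B k x))
        = fun x => ∑ n, ∑ m, ((a k n * r k) * (star (a k m) * star (r k)))
            * ((if x n then (1:ℂ) else 0) * (if x m then (1:ℂ) else 0)) := by
      funext x
      rw [hstarB]
      rw [show B k x = ∑ n, (a k n * r k) * (if x n then (1:ℂ) else 0) from by
        simp only [hBdef, ha, Finset.sum_mul]
        exact Finset.sum_congr rfl fun n _ => by ring, Finset.sum_mul_sum]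
      refine Finset.sum_congr rfl fun n _ => Finset.sum_congr rfl fun m _ => by ring
    rw [h1, integral_finset_sum _ (fun n _ => Integrable.of_finite)]
    simp_rw [integral_finset_sum _ (fun m _ => Integrable.of_finite), integral_const_mul, hmom]
    have h2 : ∀ n m : Fin N, ((a k n * r k) * (star (a k m) * star (r k)))
          * (if n = m then ((p : ℝ) : ℂ) else ((p : ℝ) : ℂ)^2)
        = ((p : ℝ) : ℂ)^2 * ((a k n * r k) * (star (a k m) * star (r k)))
          + (if n = m then (((p : ℝ) : ℂ) - ((p : ℝ) : ℂ)^2)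
              * ((a k n * r k) * (star (a k m) * star (r k))) else 0) := by
      intro n m
      by_cases h : n = m <;> simp [h] <;> ring
    simp_rw [h2, Finset.sum_add_distrib, Finset.sum_ite_eq (Finset.univ : Finset (Fin N))]
    simp only [Finset.mem_univ, if_pos]
    have h3 : ∀ n : Fin N, (((p : ℝ) : ℂ) - ((p : ℝ) : ℂ)^2)
        * ((a k n * r k) * (star (a k n) * star (r k)))
        = (((p : ℝ) : ℂ) - ((p : ℝ) : ℂ)^2) * ((Rrr : ℝ) : ℂ) := by
      intro n
      have : (a k n * r k) * (star (a k n) * star (r k))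
          = (a k n * star (a k n)) * (r k * star (r k)) := by ring
      rw [this, hunit, hrr, one_mul]
    simp_rw [h3]
    rw [Finset.sum_const, Finset.card_univ, Fintype.card_fin]
    have h4 : ∑ n, ∑ m, ((p : ℝ) : ℂ)^2 * ((a k n * r k) * (star (a k m) * star (r k)))
        = ((p : ℝ) : ℂ)^2 * ((A k * r k) * star (A k * r k)) := by
      have e2 : (A k * r k) * star (A k * r k)
          = ((∑ n, a k n) * (∑ m, star (a k m))) * (r k * star (r k)) := by
        simp only [hA, star_mul', star_sum]; ring
      rw [e2, Finset.sum_mul_sum, Finset.sum_mul, Finset.mul_sum]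
      refine Finset.sum_congr rfl fun n _ => ?_
      rw [Finset.sum_mul, Finset.mul_sum]
      exact Finset.sum_congr rfl fun m _ => by ring
    rw [h4]
    push_cast
    ring
  -- the per-entry computation
  have key : ∀ k l : Fin K, (∫ ω : Fin K → (Fin N → Bool), B k (ω k) * star (B l (ω l)))
      = (((p : ℝ) ^ 2 : ℝ) : ℂ) * ((A k * r k) * star (A l * r l))
        + (if k = l then (((N : ℝ) * (p : ℝ) * (1 - (p : ℝ)) * Rrr : ℝ) : ℂ) else 0) := by
    intro k l
    by_cases hkl : k = l
    · subst hkl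
      rw [int_one_coord (fun x => B k x * star (B k x)) k, hBB, if_pos rfl]
      push_cast
      ring
    · rw [int_two_coord (B k) (fun x => star (B l x)) k l hkl]
      rw [show (∫ x : Fin N → Bool, star (B l x)) = star (∫ x : Fin N → Bool, B l x)
        from integral_conj, hBmean, hBmean, if_neg hkl, star_mul',
        show star (((p : ℝ) : ℂ)) = ((p : ℝ) : ℂ) from Complex.conj_ofReal _]
      push_cast
      ring
  -- finish
  subst hRJJ
  refine Matrix.ext fun k l => ?_
  have lhs_eq : (Matrix.of fun k l : Fin K =>
        ∫ ω : Fin K → (Fin N → Bool),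
          ((∑ n, star (α (θ k) n) * ((if ω k n then (1 : ℂ) else 0) * α θ1 n)) * r k)
            * star ((∑ n, star (α (θ l) n) * ((if ω l n then (1 : ℂ) else 0) * α θ1 n)) * r l)
          ∂(Measure.pi fun _ : Fin K =>
              Measure.pi fun _ : Fin N => (PMF.bernoulli p (by exact_mod_cast hp)).toMeasure)) k l
      = ∫ ω : Fin K → (Fin N → Bool), B k (ω k) * star (B l (ω l)) := rfl
  rw [lhs_eq, key]
  simp only [Matrix.add_apply, Matrix.smul_apply, Matrix.of_apply, Matrix.one_apply,
    smul_eq_mul, mul_ite, mul_one, mul_zero, hA, ha]
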